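/- (Margulis' ping-pong lemma.) Let k be a field, n ≥ 1, and A, B ∈ GL_n(k). Suppose there exists a nonempty subset U of the projective space ℙ(k^n) such that (i) B·U ∩ U = ∅, (ii) (AB)·U ⊆ U, and (iii) (A²B)·U ⊆ U, where GL_n(k) acts on ℙ(k^n) by projectivizing the linear action on k^n. Then AB and A²B generate a free subsemigroup of GL_n(k): the semigroup homomorphism from the free semigroup on two generators to GL_n(k) sending the generators to AB and A²B is injective. -/

import Mathlib

/-- The action of `GL_n(k)` on the projective space `ℙ(k^n)`, obtained by projectivizing the
linear action on `k^n`. -/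
noncomputable def projAction {n : ℕ} {k : Type*} [Field k]
    (g : Matrix.GeneralLinearGroup (Fin n) k) :
    Projectivization k (Fin n → k) → Projectivization k (Fin n → k) :=
  Projectivization.map
    ((Matrix.GeneralLinearGroup.toLin g).toLinearEquiv : (Fin n → k) →ₗ[k] (Fin n → k))
    (Matrix.GeneralLinearGroup.toLin g).toLinearEquiv.injective

theorem projAction_mul' {n : ℕ} {k : Type*} [Field k]
    (g h : Matrix.GeneralLinearGroup (Fin n) k) (p : Projectivization k (Fin n → k)) :
    projAction (g * h) p = projAction g (projAction h p) := by
  induction p using Projectivization.ind with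
  | h v hv =>
    unfold projAction
    rw [Projectivization.map_mk, Projectivization.map_mk, Projectivization.map_mk]
    congr 1
    show (Matrix.GeneralLinearGroup.toLin (g * h)).toLinearEquiv v = _
    rw [map_mul]
    rfl

/-- **Margulis' ping-pong lemma.**  If `A, B ∈ GL_n(k)` admit a nonempty subset
`U ⊆ ℙ(k^n)` with `B·U ∩ U = ∅`, `(AB)·U ⊆ U` and `(A²B)·U ⊆ U`, then `AB` and `A²B`
generate a free subsemigroup of `GL_n(k)`. -/
theorem free_semigroup_of_ping_pong_pair
    {n : ℕ} {k : Type*} [Field k] (A B : Matrix.GeneralLinearGroup (Fin n) k)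
    (U : Set (Projectivization k (Fin n → k))) (hU : U.Nonempty)
    (h1 : projAction B '' U ∩ U = ∅)
    (h2 : projAction (A * B) '' U ⊆ U)
    (h3 : projAction (A ^ 2 * B) '' U ⊆ U) :
    Function.Injective
      (FreeSemigroup.lift (fun b : Bool => if b then A * B else A ^ 2 * B) :
        FreeSemigroup Bool →ₙ* Matrix.GeneralLinearGroup (Fin n) k) := by
  set f : Bool → Matrix.GeneralLinearGroup (Fin n) k :=
    fun b : Bool => if b then A * B else A ^ 2 * B with hf
  set F := (FreeSemigroup.lift f : FreeSemigroup Bool →ₙ* Matrix.GeneralLinearGroup (Fin n) k)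
    with hF
  -- single letters map U into U
  have hlet : ∀ b : Bool, ∀ u ∈ U, projAction (f b) u ∈ U := by
    intro b u hu
    cases b
    · exact h3 ⟨u, hu, rfl⟩
    · exact h2 ⟨u, hu, rfl⟩
  -- every word maps U into U
  have hmaps : ∀ w : FreeSemigroup Bool, ∀ u ∈ U, projAction (F w) u ∈ U := by
    intro w
    induction w using FreeSemigroup.recOnMul with
    | ih1 b =>
      intro u hu
      simpa [hF, FreeSemigroup.lift_of] using hlet b u hu
    | ih2 b y hb hy =>
      intro u hu
      have : F (FreeSemigroup.of b * y) = f b * F y := by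
        rw [map_mul, FreeSemigroup.lift_of]
      rw [this, projAction_mul']
      exact hlet b _ (hy u hu)
  -- disjointness of the images of U under A*B and A^2*B
  have hdisj : ∀ u ∈ U, ∀ u' ∈ U, projAction (A * B) u ≠ projAction (A ^ 2 * B) u' := by
    intro u hu u' hu' heq
    have e1 : projAction B u = projAction A⁻¹ (projAction (A * B) u) := by
      rw [← projAction_mul', inv_mul_cancel_left]
    have e2 : projAction A⁻¹ (projAction (A ^ 2 * B) u') = projAction (A * B) u' := by
      rw [← projAction_mul']
      congr 1
      rw [pow_two, mul_assoc, inv_mul_cancel_left]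
    have : projAction B u ∈ projAction B '' U ∩ U := by
      refine ⟨⟨u, hu, rfl⟩, ?_⟩
      rw [e1, heq, e2]
      exact h2 ⟨u', hu', rfl⟩
    rw [h1] at this
    exact this
  -- the image of u under a word lies in (f (head)) · U
  have himg : ∀ (w : FreeSemigroup Bool), ∀ u ∈ U,
      ∃ v ∈ U, projAction (F w) u = projAction (f w.head) v := by
    intro w
    induction w using FreeSemigroup.recOnMul with
    | ih1 b =>
      intro u hu
      exact ⟨u, hu, by rw [hF, FreeSemigroup.lift_of]; rfl⟩
    | ih2 b y hb hy =>
      intro u hu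
      refine ⟨projAction (F y) u, hmaps y u hu, ?_⟩
      have : F (FreeSemigroup.of b * y) = f b * F y := by
        rw [map_mul, FreeSemigroup.lift_of]
      rw [this, projAction_mul']
      rfl
  -- equal images force equal heads
  have hhead : ∀ (w w' : FreeSemigroup Bool), F w = F w' → w.head = w'.head := by
    intro w w' hww
    by_contra hne
    obtain ⟨u, hu⟩ := hU
    obtain ⟨v, hv, ev⟩ := himg w u hu
    obtain ⟨v', hv', ev'⟩ := himg w' u hu
    rw [hww, ev'] at ev
    cases hb : w.head <;> cases hb' : w'.head <;> rw [hb, hb'] at ev hne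
    · exact hne rfl
    · exact hdisj v' hv' v hv (by simpa [hf] using ev)
    · exact hdisj v hv v' hv' (by simpa [hf] using ev.symm)
    · exact hne rfl
  -- a nonempty word cannot represent the identity
  have hne1 : ∀ t : FreeSemigroup Bool, F t ≠ 1 := by
    intro t ht
    have e1 : F (FreeSemigroup.of (!t.head) * t) = f (!t.head) := by
      rw [map_mul, FreeSemigroup.lift_of, ht, mul_one]
    have e2 : F (t * FreeSemigroup.of (!t.head)) = f (!t.head) := by
      rw [map_mul, FreeSemigroup.lift_of, ht, one_mul]
    have := hhead _ _ (e1.trans e2.symm)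
    simp at this
  -- main induction on length
  have main : ∀ N : ℕ, ∀ w w' : FreeSemigroup Bool, w.length ≤ N → F w = F w' → w = w' := by
    intro N
    induction N with
    | zero =>
      intro w w' hl
      exact absurd hl (by simp [FreeSemigroup.length])
    | succ N ih =>
      rintro ⟨a, l⟩ ⟨a', l'⟩ hl heq
      have hhd : a = a' := hhead _ _ heq
      subst hhd
      match l, l' with
      | [], [] => rfl
      | [], b' :: m' =>
        exfalso
        have : (⟨a, b' :: m'⟩ : FreeSemigroup Bool) =
            FreeSemigroup.of a * ⟨b', m'⟩ := rfl
        rw [this, map_mul, FreeSemigroup.lift_of] at heq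
        have h0 : F (⟨a, []⟩ : FreeSemigroup Bool) = f a := FreeSemigroup.lift_of f a
        rw [h0] at heq
        have : (1 : Matrix.GeneralLinearGroup (Fin n) k) = F ⟨b', m'⟩ :=
          mul_left_cancel (a := f a) (by rw [mul_one]; exact heq)
        exact hne1 _ this.symm
      | b :: m, [] =>
        exfalso
        have : (⟨a, b :: m⟩ : FreeSemigroup Bool) =
            FreeSemigroup.of a * ⟨b, m⟩ := rfl
        rw [this, map_mul, FreeSemigroup.lift_of] at heq
        have h0 : F (⟨a, []⟩ : FreeSemigroup Bool) = f a := FreeSemigroup.lift_of f a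
        rw [h0] at heq
        have : F ⟨b, m⟩ = (1 : Matrix.GeneralLinearGroup (Fin n) k) :=
          mul_left_cancel (a := f a) (by rw [mul_one]; exact heq)
        exact hne1 _ this
      | b :: m, b' :: m' =>
        have e : (⟨a, b :: m⟩ : FreeSemigroup Bool) = FreeSemigroup.of a * ⟨b, m⟩ := rfl
        have e' : (⟨a, b' :: m'⟩ : FreeSemigroup Bool) = FreeSemigroup.of a * ⟨b', m'⟩ := rfl
        rw [e, e', map_mul, map_mul, FreeSemigroup.lift_of] at heq
        have heq2 : F ⟨b, m⟩ = F ⟨b', m'⟩ := mul_left_cancel heq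
        have hlen : (⟨b, m⟩ : FreeSemigroup Bool).length ≤ N := by
          simp only [FreeSemigroup.length] at hl ⊢
          simpa using Nat.lt_of_succ_le (Nat.le_of_succ_le_succ (by simpa using hl))
        have := ih ⟨b, m⟩ ⟨b', m'⟩ hlen heq2
        rw [e, e', this]
  intro w w' h
  exact main w.length w w' le_rfl h
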